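/- Let (q_n)_{n=0}^{j-1} be a sequence with values in {1,2}, let r be the number of indices n with q_n = 2, let k ≥ 1, and let l be the maximal number of disjoint consecutive sub-chains of the form (ν₁, 2, ν₂, …, ν_q, 2) with ν_i ∈ {1,2} and total length q+2 ≤ 2k+3 that can be extracted from the sequence. Then r ≤ 3l + 3 + (j − r)/(2k). -/

import Mathlib

namespace BlockCountAux

def scan (k : ℕ) : List ℕ → Finset (ℕ × ℕ) × ℕ
  | [] => (∅, 0)
  | [_] => (∅, 0)
  | a :: b :: t =>
      if b - a ≤ 2 * k + 1 then
        ((insert (a - 1, b - a + 2) (scan k t.tail).1), (scan k t.tail).2)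
      else
        ((scan k (b :: t)).1, (scan k (b :: t)).2 + 1)
  termination_by l => l.length
  decreasing_by
    · simp [List.length_tail]; omega
    · simp

/-- any lower bound for the elements of the list, decreased by one,
bounds the left endpoints of all produced blocks -/
lemma scan_lb (k : ℕ) : ∀ (M : List ℕ), ∀ p ∈ (scan k M).1, ∀ c : ℕ,
    (∀ x ∈ M, c ≤ x) → c ≤ p.1 + 1 := by
  intro M
  induction M using scan.induct k with
  | case1 => simp [scan]
  | case2 h => simp [scan]
  | case3 a b t hgap ih =>
    intro p hp c hc
    rw [scan, if_pos hgap] at hp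
    rcases Finset.mem_insert.mp hp with h | h
    · have := hc a (by simp)
      subst h
      simp only
      omega
    · exact ih p h c (fun x hx => hc x (by simp [List.mem_of_mem_tail hx]))
  | case4 a b t hgap ih =>
    intro p hp c hc
    rw [scan, if_neg hgap] at hp
    exact ih p hp c (fun x hx => hc x (by simp at hx ⊢; tauto))

lemma lb_tail {b : ℕ} {t : List ℕ} (h : List.Pairwise (· < ·) (b :: t)) :
    ∀ x ∈ t.tail, b + 2 ≤ x := by
  cases t with
  | nil => simp
  | cons c t2 =>
    intro x hx
    have h1 : b < c := (List.pairwise_cons.mp h).1 c (by simp)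
    have h2 : c < x := (List.pairwise_cons.mp (List.pairwise_cons.mp h).2).1 x hx
    omega

lemma disj_Ico {a b c d : ℕ} (h : b ≤ c) :
    Disjoint (Finset.Ico a b) (Finset.Ico c d) := by
  rw [Finset.disjoint_left]
  intro x hx hx'
  simp only [Finset.mem_Ico] at hx hx'
  omega

/-- length bound -/
lemma scan_length (k : ℕ) : ∀ (M : List ℕ), List.Pairwise (· < ·) M →
    (∀ x ∈ M, 1 ≤ x) →
    M.length ≤ 3 * (scan k M).1.card + (scan k M).2 + 1 := by
  intro M
  induction M using scan.induct k with
  | case1 => simp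
  | case2 h => simp
  | case3 a b t hgap ih =>
    intro hs he
    have hst : List.Pairwise (· < ·) t.tail := hs.tail.tail.tail
    have het : ∀ x ∈ t.tail, 1 ≤ x :=
      fun x hx => he x (by simp [List.mem_of_mem_tail hx])
    have hIH := ih hst het
    have hnot : (a - 1, b - a + 2) ∉ (scan k t.tail).1 := by
      intro hmem
      have hb := scan_lb k t.tail (a - 1, b - a + 2) hmem (b + 2) (lb_tail hs.tail)
      have hab : a < b := (List.pairwise_cons.mp hs).1 b (by simp)
      simp only at hb
      omega
    rw [scan, if_pos hgap]
    simp only [List.length_cons]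
    rw [Finset.card_insert_of_notMem hnot]
    have : t.length ≤ t.tail.length + 1 := by
      cases t <;> simp
    omega
  | case4 a b t hgap ih =>
    intro hs he
    have hIH := ih hs.tail (fun x hx => he x (by simp at hx ⊢; tauto))
    rw [scan, if_neg hgap]
    simp only [List.length_cons] at *
    omega

/-- validity of produced blocks -/
lemma scan_valid (q : ℕ → ℕ) (j k : ℕ) : ∀ (M : List ℕ), List.Pairwise (· < ·) M →
    (∀ x ∈ M, 1 ≤ x ∧ x < j ∧ q x = 2) →
    ∀ p ∈ (scan k M).1, 2 ≤ p.2 ∧ p.2 ≤ 2 * k + 3 ∧ p.1 + p.2 ≤ j ∧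
      q (p.1 + 1) = 2 ∧ q (p.1 + p.2 - 1) = 2 := by
  intro M
  induction M using scan.induct k with
  | case1 => simp [scan]
  | case2 h => simp [scan]
  | case3 a b t hgap ih =>
    intro hs he p hp
    rw [scan, if_pos hgap] at hp
    rcases Finset.mem_insert.mp hp with h | h
    · subst h
      obtain ⟨ha1, haj, ha2⟩ := he a (by simp)
      obtain ⟨hb1, hbj, hb2⟩ := he b (by simp)
      have hab : a < b := (List.pairwise_cons.mp hs).1 b (by simp)
      simp only
      have e1 : a - 1 + 1 = a := by omega
      have e2 : a - 1 + (b - a + 2) - 1 = b := by omega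
      rw [e1, e2]
      refine ⟨by omega, by omega, by omega, ha2, hb2⟩
    · exact ih hs.tail.tail.tail
        (fun x hx => he x (by simp [List.mem_of_mem_tail hx])) p h
  | case4 a b t hgap ih =>
    intro hs he p hp
    rw [scan, if_neg hgap] at hp
    exact ih hs.tail (fun x hx => he x (by simp at hx ⊢; tauto)) p hp

/-- pairwise disjointness of produced blocks -/
lemma scan_disj (k : ℕ) : ∀ (M : List ℕ), List.Pairwise (· < ·) M →
    (∀ x ∈ M, 1 ≤ x) →
    ∀ p ∈ (scan k M).1, ∀ p' ∈ (scan k M).1, p ≠ p' →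
      Disjoint (Finset.Ico p.1 (p.1 + p.2)) (Finset.Ico p'.1 (p'.1 + p'.2)) := by
  intro M
  induction M using scan.induct k with
  | case1 => simp [scan]
  | case2 h => simp [scan]
  | case3 a b t hgap ih =>
    intro hs he p hp p' hp' hne
    rw [scan, if_pos hgap] at hp hp'
    have hst : List.Pairwise (· < ·) t.tail := hs.tail.tail.tail
    have het : ∀ x ∈ t.tail, 1 ≤ x :=
      fun x hx => he x (by simp [List.mem_of_mem_tail hx])
    have ha1 : 1 ≤ a := he a (by simp)
    have hab : a < b := (List.pairwise_cons.mp hs).1 b (by simp)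
    have key : ∀ p'' ∈ (scan k t.tail).1,
        Disjoint (Finset.Ico (a - 1) (a - 1 + (b - a + 2)))
          (Finset.Ico p''.1 (p''.1 + p''.2)) := by
      intro p'' hp''
      have hb := scan_lb k t.tail p'' hp'' (b + 2) (lb_tail hs.tail)
      exact disj_Ico (by omega)
    rcases Finset.mem_insert.mp hp with h | h <;>
      rcases Finset.mem_insert.mp hp' with h' | h'
    · exact absurd (h.trans h'.symm) hne
    · subst h; exact key p' h'
    · subst h'; exact (key p h).symm
    · exact ih hst het p h p' h' hne
  | case4 a b t hgap ih =>
    intro hs he p hp p' hp' hne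
    rw [scan, if_neg hgap] at hp hp'
    exact ih hs.tail (fun x hx => he x (by simp at hx ⊢; tauto)) p hp p' hp' hne

def onesAbove (q : ℕ → ℕ) (j m : ℕ) : ℕ :=
  ((Finset.Ico m j).filter (fun n => q n = 1)).card

lemma onesAbove_anti (q : ℕ → ℕ) (j : ℕ) {m m' : ℕ} (h : m ≤ m') :
    onesAbove q j m' ≤ onesAbove q j m :=
  Finset.card_le_card (Finset.filter_subset_filter _
    (Finset.Ico_subset_Ico h le_rfl))

/-- bad count bound -/
lemma scan_bad (q : ℕ → ℕ) (j k : ℕ) : ∀ (M : List ℕ), List.Pairwise (· < ·) M →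
    (∀ x ∈ M, 1 ≤ x ∧ x < j ∧ q x = 2) →
    M.Chain' (fun a b => ∀ x, a < x → x < b → x < j → q x = 1) →
    2 * k * (scan k M).2 ≤ onesAbove q j (M.headD j) := by
  intro M
  induction M using scan.induct k with
  | case1 => simp [scan]
  | case2 h => simp [scan]
  | case3 a b t hgap ih =>
    intro hs he hc
    have hIH := ih hs.tail.tail.tail
      (fun x hx => he x (by simp [List.mem_of_mem_tail hx])) hc.tail.tail.tail
    rw [scan, if_pos hgap]
    simp only [List.headD_cons]
    refine hIH.trans (onesAbove_anti q j ?_)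
    cases ht : t.tail with
    | nil => simp [ht]; exact le_of_lt (he a (by simp)).2.1
    | cons c t2 =>
      have : b + 2 ≤ c := lb_tail hs.tail c (by simp [ht])
      have hab : a < b := (List.pairwise_cons.mp hs).1 b (by simp)
      simp [ht]; omega
  | case4 a b t hgap ih =>
    intro hs he hc
    have hIH := ih hs.tail (fun x hx => he x (by simp at hx ⊢; tauto)) hc.tail
    rw [scan, if_neg hgap]
    simp only [List.headD_cons] at *
    obtain ⟨ha1, haj, ha2⟩ := he a (by simp)
    obtain ⟨hb1, hbj, hb2⟩ := he b (by simp)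
    have hab : a < b := (List.pairwise_cons.mp hs).1 b (by simp)
    have hrel : ∀ x, a < x → x < b → x < j → q x = 1 := (List.isChain_cons_cons.mp hc).1
    -- split Ico a j
    have hsplit : Finset.Ico a j = Finset.Ico a b ∪ Finset.Ico b j :=
      (Finset.Ico_union_Ico_eq_Ico (le_of_lt hab) (le_of_lt hbj)).symm
    have hdisj : Disjoint (Finset.Ico a b) (Finset.Ico b j) := disj_Ico le_rfl
    have hcards : onesAbove q j a =
        ((Finset.Ico a b).filter (fun n => q n = 1)).card + onesAbove q j b := by
      rw [onesAbove, hsplit, Finset.filter_union,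
        Finset.card_union_of_disjoint (Finset.disjoint_filter_filter hdisj)]
      rfl
    have hsub : Finset.Ico (a + 1) b ⊆ (Finset.Ico a b).filter (fun n => q n = 1) := by
      intro x hx
      simp only [Finset.mem_Ico] at hx
      simp only [Finset.mem_filter, Finset.mem_Ico]
      exact ⟨⟨by omega, hx.2⟩, hrel x (by omega) hx.2 (by omega)⟩
    have hcard2 : 2 * k ≤ ((Finset.Ico a b).filter (fun n => q n = 1)).card := by
      have := Finset.card_le_card hsub
      rw [Nat.card_Ico] at this
      omega
    have hmul : 2 * k * ((scan k (b :: t)).2 + 1)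
        = 2 * k * (scan k (b :: t)).2 + 2 * k := by ring
    omega

lemma sorted_gap (L : List ℕ) (hL : List.Pairwise (· < ·) L) :
    L.Chain' (fun a b => ∀ x ∈ L, a < x → x < b → False) := by
  refine List.isChain_iff_getElem.mpr ?_
  intro i hi x hx h1 h2
  obtain ⟨⟨m, hm⟩, rfl⟩ := List.mem_iff_get.mp hx
  have hmono := hL.sortedLT.strictMono_get
  rcases le_or_gt m i with h | h
  · exact absurd h1 (not_lt.2 (hmono.monotone (Fin.mk_le_mk.mpr h)))
  · exact absurd h2 (not_lt.2 (hmono.monotone (Fin.mk_le_mk.mpr h)))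

end BlockCountAux



/-- let `(q n)_{n<j}` take values in `{1,2}` and let `r` be the
number of indices with value `2`.  A "block" is a contiguous sub-chain
`(ν₁, 2, ν₂, …, ν_q, 2)` of length `q + 2 ≤ 2k + 3` (second and last entries
equal to `2`), encoded by its starting index `s` and its length `len`.
If `l` bounds the cardinality of every pairwise disjoint family of blocks,
then `r ≤ 3l + 3 + (j − r)/(2k)`. -/
theorem block_count_bound
    (j k l : ℕ) (hj : 1 ≤ j) (hk : 1 ≤ k)
    (q : ℕ → ℕ) (hq : ∀ n < j, q n = 1 ∨ q n = 2)
    (r : ℕ) (hr : r = ((Finset.range j).filter (fun n => q n = 2)).card)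
    (hl : ∀ B : Finset (ℕ × ℕ),
      (∀ p ∈ B, 2 ≤ p.2 ∧ p.2 ≤ 2 * k + 3 ∧ p.1 + p.2 ≤ j ∧
        q (p.1 + 1) = 2 ∧ q (p.1 + p.2 - 1) = 2) →
      (∀ p ∈ B, ∀ p' ∈ B, p ≠ p' →
        Disjoint (Finset.Ico p.1 (p.1 + p.2)) (Finset.Ico p'.1 (p'.1 + p'.2))) →
      B.card ≤ l) :
    (r : ℝ) ≤ 3 * l + 3 + (j - r) / (2 * k) := by
  classical
  set L : List ℕ := (List.range j).filter (fun n => decide (q n = 2)) with hL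
  have hrL : r = L.length := hr.trans rfl
  have hLs : L.Pairwise (· < ·) := (List.pairwise_lt_range (n := j)).filter _
  have hmemL : ∀ x, x ∈ L ↔ x < j ∧ q x = 2 := by
    intro x
    simp [hL, List.mem_filter, List.mem_range]
  have hchain : L.Chain' (fun a b => ∀ x, a < x → x < b → x < j → q x = 1) := by
    refine (BlockCountAux.sorted_gap L hLs).imp ?_
    intro a b hab x h1 h2 h3
    rcases hq x h3 with h | h
    · exact h
    · exact absurd ((hmemL x).mpr ⟨h3, h⟩) (fun hm => hab x hm h1 h2)
  set M : List ℕ := L.tail with hM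
  have hMs : M.Pairwise (· < ·) := hLs.tail
  have hMe : ∀ x ∈ M, 1 ≤ x ∧ x < j ∧ q x = 2 := by
    intro x hx
    have hxL : x ∈ L := List.mem_of_mem_tail hx
    obtain ⟨hxj, hx2⟩ := (hmemL x).mp hxL
    refine ⟨?_, hxj, hx2⟩
    cases hLc : L with
    | nil => exact absurd hxL (by simp [hLc])
    | cons h0 t0 =>
      have : h0 < x := (List.pairwise_cons.mp (hLc ▸ hLs)).1 x (by rw [hM, hLc] at hx; exact hx)
      omega
  have hMe1 : ∀ x ∈ M, 1 ≤ x := fun x hx => (hMe x hx).1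
  have hMchain : M.Chain' (fun a b => ∀ x, a < x → x < b → x < j → q x = 1) :=
    hchain.tail
  -- card bound via hl
  have hcard : (BlockCountAux.scan k M).1.card ≤ l :=
    hl _ (BlockCountAux.scan_valid q j k M hMs hMe)
      (BlockCountAux.scan_disj k M hMs hMe1)
  -- length bound
  have hlen : M.length ≤ 3 * (BlockCountAux.scan k M).1.card
      + (BlockCountAux.scan k M).2 + 1 := BlockCountAux.scan_length k M hMs hMe1
  have hrlen : r ≤ M.length + 1 := by
    rw [hrL, hM]
    cases L <;> simp
  -- bad bound
  have hbad : 2 * k * (BlockCountAux.scan k M).2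
      ≤ BlockCountAux.onesAbove q j (M.headD j) :=
    BlockCountAux.scan_bad q j k M hMs hMe hMchain
  have hbad0 : BlockCountAux.onesAbove q j (M.headD j)
      ≤ BlockCountAux.onesAbove q j 0 := BlockCountAux.onesAbove_anti q j (Nat.zero_le _)
  -- total ones = j - r
  have hrj : r ≤ j := by
    rw [hr]
    exact (Finset.card_filter_le _ _).trans (by simp)
  have hones : BlockCountAux.onesAbove q j 0 = j - r := by
    have hpart := Finset.card_filter_add_card_filter_not
      (s := Finset.range j) (p := fun n => q n = 2)
    have hcongr : (Finset.range j).filter (fun n => ¬ q n = 2)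
        = (Finset.range j).filter (fun n => q n = 1) := by
      apply Finset.filter_congr
      intro n hn
      simp only [Finset.mem_range] at hn
      rcases hq n hn with h | h <;> simp [h]
    rw [hcongr] at hpart
    have : BlockCountAux.onesAbove q j 0
        = ((Finset.range j).filter (fun n => q n = 1)).card := by
      rw [BlockCountAux.onesAbove, Finset.range_eq_Ico]
    rw [this]
    simp only [Finset.card_range] at hpart
    omega
  have hbadfin : 2 * k * (BlockCountAux.scan k M).2 ≤ j - r := by
    rw [← hones]; exact hbad.trans hbad0
  -- nat bound
  have hnat : r ≤ 3 * l + (BlockCountAux.scan k M).2 + 2 := by omega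
  -- pass to reals
  set B := (BlockCountAux.scan k M).2 with hB
  have hk0 : (0 : ℝ) < 2 * k := by positivity
  have hjr : ((j : ℝ) - r) = ((j - r : ℕ) : ℝ) := by
    rw [Nat.cast_sub hrj]
  have hBreal : (B : ℝ) ≤ ((j : ℝ) - r) / (2 * k) := by
    rw [le_div_iff₀ hk0, hjr]
    calc (B : ℝ) * (2 * k) = ((2 * k * B : ℕ) : ℝ) := by push_cast; ring
    _ ≤ ((j - r : ℕ) : ℝ) := by exact_mod_cast hbadfin
  have hrreal : (r : ℝ) ≤ 3 * l + B + 2 := by exact_mod_cast hnat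
  linarith
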